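/- Let F_q be a finite field with q elements, q an odd prime power, and let n ≥ 1 with gcd(n, q) = 1. Let u = (1/n)·Σ_{l=0}^{n−1} x^l ∈ F_q D_{2n} (the evaluation at the rotation generator x of the polynomial e_{x−1} = (1/n)(x^n−1)/(x−1)). Then ((1+y)/2)·u and ((1−y)/2)·u are primitive central idempotents of F_q D_{2n}. Moreover, if n is even and v = (1/n)·Σ_{l=0}^{n−1} (−1)^l x^l, then ((1+y)/2)·v and ((1−y)/2)·v are also primitive central idempotents of F_q D_{2n}. -/

import Mathlib

open Polynomial

/-- A primitive central idempotent of a ring: a nonzero central idempotent that is not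
the sum of two nonzero orthogonal central idempotents. -/
def IsPrimitiveCentralIdempotent {R : Type*} [Ring R] (e : R) : Prop :=
  e ≠ 0 ∧ IsIdempotentElem e ∧ e ∈ Set.center R ∧
    ∀ a b : R, a ≠ 0 → b ≠ 0 → IsIdempotentElem a → IsIdempotentElem b →
      a ∈ Set.center R → b ∈ Set.center R → a * b = 0 → e ≠ a + b

/-- The rotation generator `x` of `D_{2n}` inside the group algebra. -/
noncomputable def rotGen (F : Type) [Field F] (n : ℕ) : MonoidAlgebra F (DihedralGroup n) :=
  MonoidAlgebra.of F (DihedralGroup n) (DihedralGroup.r 1)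

/-- The reflection generator `y` of `D_{2n}` inside the group algebra. -/
noncomputable def reflGen (F : Type) [Field F] (n : ℕ) : MonoidAlgebra F (DihedralGroup n) :=
  MonoidAlgebra.of F (DihedralGroup n) (DihedralGroup.sr 0)

namespace Stmt4Aux

variable {F : Type} [Field F] {G : Type*} [Group G]

lemma mul_key (χ : G →* F) (e : MonoidAlgebra F G)
    (h1 : ∀ g : G, (MonoidAlgebra.single g 1 : MonoidAlgebra F G) * e = χ g • e)
    (x : MonoidAlgebra F G) :
    x * e = (MonoidAlgebra.lift F F G χ x) • e := by
  have h : (LinearMap.mulRight F e : MonoidAlgebra F G →ₗ[F] MonoidAlgebra F G)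
      = ((MonoidAlgebra.lift F F G χ).toLinearMap).smulRight e := by
    apply MonoidAlgebra.lhom_ext'
    intro a
    apply LinearMap.ext
    intro b
    simp only [LinearMap.coe_comp, Function.comp_apply, MonoidAlgebra.lsingle_apply,
      LinearMap.mulRight_apply, LinearMap.smulRight_apply, AlgHom.toLinearMap_apply,
      MonoidAlgebra.lift_single, smul_eq_mul]
    calc MonoidAlgebra.single a b * e = (b • MonoidAlgebra.single a 1) * e := by
          rw [MonoidAlgebra.smul_single', mul_one]
      _ = b • (MonoidAlgebra.single a 1 * e) := smul_mul_assoc b _ e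
      _ = (b * χ a) • e := by rw [h1 a, smul_smul]
  exact congrArg (fun f => f x) h |>.trans rfl

lemma key_mul (χ : G →* F) (e : MonoidAlgebra F G)
    (h2 : ∀ g : G, e * (MonoidAlgebra.single g 1 : MonoidAlgebra F G) = χ g • e)
    (x : MonoidAlgebra F G) :
    e * x = (MonoidAlgebra.lift F F G χ x) • e := by
  have h : (LinearMap.mulLeft F e : MonoidAlgebra F G →ₗ[F] MonoidAlgebra F G)
      = ((MonoidAlgebra.lift F F G χ).toLinearMap).smulRight e := by
    apply MonoidAlgebra.lhom_ext'
    intro a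
    apply LinearMap.ext
    intro b
    simp only [LinearMap.coe_comp, Function.comp_apply, MonoidAlgebra.lsingle_apply,
      LinearMap.mulLeft_apply, LinearMap.smulRight_apply, AlgHom.toLinearMap_apply,
      MonoidAlgebra.lift_single, smul_eq_mul]
    calc e * MonoidAlgebra.single a b = e * (b • MonoidAlgebra.single a 1) := by
          rw [MonoidAlgebra.smul_single', mul_one]
      _ = b • (e * MonoidAlgebra.single a 1) := mul_smul_comm b e _
      _ = (b * χ a) • e := by rw [h2 a, smul_smul]
  exact congrArg (fun f => f x) h |>.trans rfl

lemma aux (χ : G →* F) (e : MonoidAlgebra F G) (he : e ≠ 0)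
    (h1 : ∀ g : G, (MonoidAlgebra.single g 1 : MonoidAlgebra F G) * e = χ g • e)
    (h2 : ∀ g : G, e * (MonoidAlgebra.single g 1 : MonoidAlgebra F G) = χ g • e)
    (hid : IsIdempotentElem e) :
    IsPrimitiveCentralIdempotent e := by
  have key1 := mul_key χ e h1
  have key2 := key_mul χ e h2
  refine ⟨he, hid, ?_, ?_⟩
  · rw [Semigroup.mem_center_iff]
    intro x
    rw [key1 x, key2 x]
  · intro a b ha hb hia hib _ _ hab heq
    set φ := MonoidAlgebra.lift F F G χ
    have hae : a * e = a := by rw [heq, mul_add, hia, hab, add_zero]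
    set t := φ a with hta
    have haφ : a = t • e := by rw [← hae, key1 a]
    have hsq : (t * t) • e = t • e := by
      calc (t * t) • e = (t • e) * (t • e) := by
            rw [smul_mul_assoc, mul_smul_comm, hid, smul_smul]
        _ = a * a := by rw [← haφ]
        _ = a := hia
        _ = t • e := haφ
    have hz : (t * t - t) • e = 0 := by rw [sub_smul, hsq, sub_self]
    rcases smul_eq_zero.mp hz with h | h
    · have h' : t * (t - 1) = 0 := by rw [mul_sub, mul_one]; exact h
      rcases mul_eq_zero.mp h' with h0 | h1
      · exact ha (by rw [haφ, h0, zero_smul])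
      · have hφ1 : t = 1 := sub_eq_zero.mp h1
        have hae' : a = e := by rw [haφ, hφ1, one_smul]
        have hb0 : b = 0 := by
          have h3 : e = e + b := by nth_rewrite 1 [heq]; rw [hae']
          exact (left_eq_add.mp h3)
        exact hb hb0
    · exact he h

lemma char_sum_h1 [Fintype G] [DecidableEq G] (χ : G →* F)
    (hsq : ∀ g : G, χ g * χ g = 1) (g : G) :
    (MonoidAlgebra.single g 1 : MonoidAlgebra F G) * (∑ h : G, MonoidAlgebra.single h (χ h))
      = χ g • ∑ h : G, MonoidAlgebra.single h (χ h) := by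
  rw [Finset.mul_sum, Finset.smul_sum]
  rw [← Equiv.sum_comp (Equiv.mulLeft g) (fun h => χ g • MonoidAlgebra.single h (χ h))]
  apply Finset.sum_congr rfl
  intro h _
  simp only [Equiv.coe_mulLeft, Function.comp_apply]
  rw [MonoidAlgebra.single_mul_single, one_mul, MonoidAlgebra.smul_single', map_mul]
  congr 1
  linear_combination (-(χ h)) * hsq g

lemma char_sum_h2 [Fintype G] [DecidableEq G] (χ : G →* F)
    (hsq : ∀ g : G, χ g * χ g = 1) (g : G) :
    (∑ h : G, MonoidAlgebra.single h (χ h)) * (MonoidAlgebra.single g 1 : MonoidAlgebra F G)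
      = χ g • ∑ h : G, MonoidAlgebra.single h (χ h) := by
  rw [Finset.sum_mul, Finset.smul_sum]
  rw [← Equiv.sum_comp (Equiv.mulRight g) (fun h => χ g • MonoidAlgebra.single h (χ h))]
  apply Finset.sum_congr rfl
  intro h _
  simp only [Equiv.coe_mulRight, Function.comp_apply]
  rw [MonoidAlgebra.single_mul_single, mul_one, MonoidAlgebra.smul_single', map_mul]
  congr 1
  linear_combination (-(χ h)) * hsq g

lemma aux2 [Fintype G] [DecidableEq G] (χ : G →* F)
    (hsq : ∀ g : G, χ g * χ g = 1) (c : F) (hc : c ≠ 0)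
    (hcard : c * (Fintype.card G : F) = 1) :
    IsPrimitiveCentralIdempotent (c • ∑ g : G, MonoidAlgebra.single g (χ g)) := by
  set S : MonoidAlgebra F G := ∑ g : G, MonoidAlgebra.single g (χ g) with hS
  have h1 : ∀ g : G, MonoidAlgebra.single g (1:F) * (c • S) = χ g • (c • S) := fun g => by
    rw [mul_smul_comm, hS, char_sum_h1 χ hsq g, smul_comm]
  have h2 : ∀ g : G, (c • S) * MonoidAlgebra.single g (1:F) = χ g • (c • S) := fun g => by
    rw [smul_mul_assoc, hS, char_sum_h2 χ hsq g, smul_comm]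
  have he : (c • S) ≠ 0 := by
    intro h0
    have happ : (c • S).coeff 1 = 0 := by rw [h0]; rfl
    rw [MonoidAlgebra.coeff_smul_apply, hS, MonoidAlgebra.coeff_sum, Finsupp.finset_sum_apply] at happ
    have hS1 : (∑ g : G, (MonoidAlgebra.single g (χ g) : MonoidAlgebra F G).coeff 1) = 1 := by
      rw [Finset.sum_eq_single (1 : G)]
      · simp [MonoidAlgebra.coeff_single]
      · intro g _ hg; simp [MonoidAlgebra.coeff_single, Finsupp.single_apply, hg]
      · simp
    rw [hS1, smul_eq_mul, mul_one] at happ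
    exact hc happ
  have hφ : MonoidAlgebra.lift F F G χ (c • S) = 1 := by
    rw [map_smul, hS, map_sum]
    have h : ∀ g : G, (MonoidAlgebra.lift F F G χ) (MonoidAlgebra.single g (χ g)) = 1 := by
      intro g; rw [MonoidAlgebra.lift_single, smul_eq_mul, hsq]
    rw [Finset.sum_congr rfl fun g _ => h g, Finset.sum_const, Finset.card_univ, nsmul_eq_mul,
      mul_one, smul_eq_mul, hcard]
  have hid : IsIdempotentElem (c • S) := by
    have hk := mul_key χ (c • S) h1 (c • S)
    rw [hφ, one_smul] at hk
    exact hk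
  exact aux χ _ he h1 h2 hid

open DihedralGroup

variable {n : ℕ}

def sgnChar (F : Type) [Field F] (n : ℕ) : DihedralGroup n →* F where
  toFun g := match g with | .r _ => 1 | .sr _ => -1
  map_one' := rfl
  map_mul' := by rintro (a | a) (b | b) <;> simp

@[simp] lemma sgnChar_r (i : ZMod n) : sgnChar F n (.r i) = 1 := rfl
@[simp] lemma sgnChar_sr (i : ZMod n) : sgnChar F n (.sr i) = -1 := rfl

def altFun (F : Type) [Field F] {n : ℕ} (h : (2:ℕ) ∣ n) : DihedralGroup n → F
  | .r i => if ZMod.castHom h (ZMod 2) i = 0 then 1 else -1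
  | .sr i => if ZMod.castHom h (ZMod 2) i = 0 then 1 else -1

@[simp] lemma altFun_r (h : (2:ℕ) ∣ n) (i : ZMod n) :
    altFun F h (.r i) = if ZMod.castHom h (ZMod 2) i = 0 then 1 else -1 := rfl
@[simp] lemma altFun_sr (h : (2:ℕ) ∣ n) (i : ZMod n) :
    altFun F h (.sr i) = if ZMod.castHom h (ZMod 2) i = 0 then 1 else -1 := rfl

lemma zkey (A B : ZMod 2) : (if A + B = 0 then (1:F) else -1)
    = (if A = 0 then (1:F) else -1) * (if B = 0 then (1:F) else -1) := by
  have h : ∀ X : ZMod 2, X = 0 ∨ X = 1 := by decide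
  rcases h A with hA | hA <;> rcases h B with hB | hB <;> subst hA <;> subst hB
  · norm_num
  · norm_num
  · norm_num
  · rw [if_pos (by decide : (1:ZMod 2) + 1 = 0)]; norm_num

lemma zsub : ∀ A B : ZMod 2, B - A = A + B := by decide

def altChar (F : Type) [Field F] (n : ℕ) (h : (2:ℕ) ∣ n) : DihedralGroup n →* F where
  toFun := altFun F h
  map_one' := by
    show altFun F h (.r 0) = 1
    rw [altFun_r, map_zero, if_pos rfl]
  map_mul' := by
    rintro (a | a) (b | b) <;>
      simp only [r_mul_r, r_mul_sr, sr_mul_r, sr_mul_sr, altFun_r, altFun_sr, map_add, map_sub]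
    · exact zkey _ _
    · rw [zsub _ _]; exact zkey _ _
    · exact zkey _ _
    · rw [zsub _ _]; exact zkey _ _

@[simp] lemma altChar_r (h : (2:ℕ) ∣ n) (i : ZMod n) :
    altChar F n h (.r i) = if ZMod.castHom h (ZMod 2) i = 0 then 1 else -1 := rfl
@[simp] lemma altChar_sr (h : (2:ℕ) ∣ n) (i : ZMod n) :
    altChar F n h (.sr i) = if ZMod.castHom h (ZMod 2) i = 0 then 1 else -1 := rfl

lemma sum_range_zmod {M : Type*} [AddCommMonoid M] [NeZero n] (f : ZMod n → M) :
    ∑ l ∈ Finset.range n, f (l : ZMod n) = ∑ i : ZMod n, f i := by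
  refine Finset.sum_nbij' (fun l => (l : ZMod n)) (fun i => i.val) ?_ ?_ ?_ ?_ ?_
  · intro l _; exact Finset.mem_univ _
  · intro i _; simpa [Finset.mem_range] using ZMod.val_lt i
  · intro l hl; exact ZMod.val_cast_of_lt (Finset.mem_range.mp hl)
  · intro i _; exact ZMod.natCast_rightInverse i
  · intro l _; rfl

def dEquiv (n : ℕ) : (ZMod n) ⊕ (ZMod n) ≃ DihedralGroup n where
  toFun i := match i with | Sum.inl j => r j | Sum.inr j => sr j
  invFun g := match g with | r j => Sum.inl j | sr j => Sum.inr j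
  left_inv := by rintro (x | x) <;> rfl
  right_inv := by rintro (x | x) <;> rfl

lemma sum_dihedral {M : Type*} [AddCommMonoid M] [NeZero n] (f : DihedralGroup n → M) :
    ∑ g : DihedralGroup n, f g = ∑ i : ZMod n, f (r i) + ∑ i : ZMod n, f (sr i) := by
  rw [← Equiv.sum_comp (dEquiv n) f, Fintype.sum_sum_type]
  rfl

lemma rot_pow (l : ℕ) : rotGen F n ^ l = MonoidAlgebra.single (r (l : ZMod n)) (1:F) := by
  rw [rotGen, ← map_pow, r_one_pow, MonoidAlgebra.of_apply]

lemma rot_sum [NeZero n] (w : ZMod n → F) (wl : ℕ → F) (hw : ∀ l : ℕ, wl l = w (l : ZMod n)) :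
    ∑ l ∈ Finset.range n, wl l • rotGen F n ^ l
      = ∑ i : ZMod n, MonoidAlgebra.single (r i) (w i) := by
  rw [← sum_range_zmod (fun i => MonoidAlgebra.single (r i) (w i))]
  apply Finset.sum_congr rfl
  intro l _
  rw [rot_pow, MonoidAlgebra.smul_single', mul_one, hw l]

lemma rot_sum_one [NeZero n] :
    ∑ l ∈ Finset.range n, rotGen F n ^ l
      = ∑ i : ZMod n, MonoidAlgebra.single (r i) (1:F) := by
  rw [← sum_range_zmod (fun i => MonoidAlgebra.single (r i) (1:F))]
  exact Finset.sum_congr rfl fun l _ => rot_pow l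

lemma expand_plus [NeZero n] (w : ZMod n → F) :
    ((2:F)⁻¹ • (1 + reflGen F n)) * ((n:F)⁻¹ • ∑ i : ZMod n, MonoidAlgebra.single (r i) (w i))
      = ((2:F)⁻¹ * (n:F)⁻¹) • (∑ i : ZMod n, MonoidAlgebra.single (r i) (w i)
          + ∑ i : ZMod n, MonoidAlgebra.single (sr i) (w i)) := by
  rw [smul_mul_assoc, mul_smul_comm, smul_smul]
  congr 1
  rw [add_mul, one_mul, reflGen, MonoidAlgebra.of_apply, Finset.mul_sum]
  congr 1
  apply Finset.sum_congr rfl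
  intro i _
  rw [MonoidAlgebra.single_mul_single, one_mul, sr_mul_r, zero_add]

lemma expand_minus [NeZero n] (w : ZMod n → F) :
    ((2:F)⁻¹ • (1 - reflGen F n)) * ((n:F)⁻¹ • ∑ i : ZMod n, MonoidAlgebra.single (r i) (w i))
      = ((2:F)⁻¹ * (n:F)⁻¹) • (∑ i : ZMod n, MonoidAlgebra.single (r i) (w i)
          + ∑ i : ZMod n, MonoidAlgebra.single (sr i) (-1 * w i)) := by
  rw [smul_mul_assoc, mul_smul_comm, smul_smul]
  congr 1
  rw [sub_mul, one_mul, reflGen, MonoidAlgebra.of_apply, Finset.mul_sum, sub_eq_add_neg,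
    ← Finset.sum_neg_distrib]
  congr 1
  apply Finset.sum_congr rfl
  intro i _
  rw [MonoidAlgebra.single_mul_single, one_mul, sr_mul_r, zero_add, neg_one_mul]
  exact (MonoidAlgebra.single_neg (sr i) (w i)).symm

lemma main_case [NeZero n] (h2 : (2:F) ≠ 0) (hnF : (n:F) ≠ 0)
    (χ : DihedralGroup n →* F) (w w' : ZMod n → F)
    (hr : ∀ i, χ (r i) = w i) (hsr : ∀ i, χ (sr i) = w' i)
    (hsq : ∀ g, χ g * χ g = 1) :
    IsPrimitiveCentralIdempotent (((2:F)⁻¹ * (n:F)⁻¹) •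
      (∑ i : ZMod n, MonoidAlgebra.single (r i) (w i)
        + ∑ i : ZMod n, MonoidAlgebra.single (sr i) (w' i))) := by
  have hsum : (∑ i : ZMod n, MonoidAlgebra.single (r i) (w i)
      + ∑ i : ZMod n, MonoidAlgebra.single (sr i) (w' i))
      = ∑ g : DihedralGroup n, MonoidAlgebra.single g (χ g) := by
    rw [sum_dihedral (fun g => (MonoidAlgebra.single g (χ g) : MonoidAlgebra F (DihedralGroup n)))]
    congr 1
    · exact Finset.sum_congr rfl fun i _ => by rw [hr]
    · exact Finset.sum_congr rfl fun i _ => by rw [hsr]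
  rw [hsum]
  apply aux2 χ hsq
  · exact mul_ne_zero (inv_ne_zero h2) (inv_ne_zero hnF)
  · rw [DihedralGroup.card, Nat.cast_mul, Nat.cast_ofNat]
    field_simp

end Stmt4Aux

open Stmt4Aux DihedralGroup

/-- with `u = (1/n)·Σ x^l`, the elements `((1±y)/2)·u` are primitive central
idempotents of `F_q D_{2n}`; if moreover `n` is even and `v = (1/n)·Σ (-1)^l x^l`, then
`((1±y)/2)·v` are also primitive central idempotents. -/
theorem stmt_4 (F : Type) [Field F] [Fintype F] (q n : ℕ)
    (hq : Fintype.card F = q) (hqodd : Odd q) (hn : 1 ≤ n) (hco : Nat.Coprime n q)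
    (u : MonoidAlgebra F (DihedralGroup n))
    (hu : u = (n : F)⁻¹ • ∑ l ∈ Finset.range n, rotGen F n ^ l) :
    IsPrimitiveCentralIdempotent (((2 : F)⁻¹ • (1 + reflGen F n)) * u) ∧
    IsPrimitiveCentralIdempotent (((2 : F)⁻¹ • (1 - reflGen F n)) * u) ∧
    (Even n → ∀ v : MonoidAlgebra F (DihedralGroup n),
      v = (n : F)⁻¹ • ∑ l ∈ Finset.range n, ((-1 : F) ^ l) • rotGen F n ^ l →
      IsPrimitiveCentralIdempotent (((2 : F)⁻¹ • (1 + reflGen F n)) * v) ∧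
      IsPrimitiveCentralIdempotent (((2 : F)⁻¹ • (1 - reflGen F n)) * v)) := by
  haveI : NeZero n := ⟨by omega⟩
  set p := ringChar F with hp
  haveI : CharP F p := ringChar.charP F
  obtain ⟨k, hpprime, hcard⟩ := FiniteField.card F p
  rw [hq] at hcard
  have h2 : (2:F) ≠ 0 := by
    intro h0
    have hd2 : p ∣ 2 := (CharP.cast_eq_zero_iff F p 2).mp (by exact_mod_cast h0)
    have hp2 : p = 2 := (Nat.prime_dvd_prime_iff_eq hpprime Nat.prime_two).mp hd2
    have heq : Even q := by
      rw [hcard, hp2]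
      exact (Nat.even_pow.mpr ⟨even_two, k.ne_zero⟩)
    exact (Nat.not_even_iff_odd.mpr hqodd) heq
  have hnF : (n:F) ≠ 0 := by
    intro h0
    have hdn : p ∣ n := (CharP.cast_eq_zero_iff F p n).mp h0
    have hdq : p ∣ q := by rw [hcard]; exact dvd_pow_self p k.ne_zero
    have hd1 : p ∣ 1 := hco ▸ Nat.dvd_gcd hdn hdq
    exact hpprime.ne_one (Nat.dvd_one.mp hd1)
  refine ⟨?_, ?_, ?_⟩
  · rw [hu, rot_sum_one, expand_plus]
    refine main_case h2 hnF 1 (fun _ => 1) (fun _ => 1) (fun i => rfl) (fun i => rfl) ?_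
    intro g; rw [MonoidHom.one_apply, one_mul]
  · rw [hu, rot_sum_one, expand_minus]
    refine main_case h2 hnF (sgnChar F n) (fun _ => 1) (fun _ => -1 * 1)
      (fun i => sgnChar_r i) (fun i => by rw [sgnChar_sr, mul_one]) ?_
    rintro (a | a) <;> simp
  · intro hev v hv
    have hdvd : (2:ℕ) ∣ n := by obtain ⟨m, hm⟩ := hev; exact ⟨m, by omega⟩
    set w : ZMod n → F := fun i => if ZMod.castHom hdvd (ZMod 2) i = 0 then 1 else -1 with hwdef
    have hw : ∀ l : ℕ, ((-1:F)^l) = w ((l : ZMod n)) := by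
      intro l
      rw [hwdef]
      show (-1:F)^l = if ZMod.castHom hdvd (ZMod 2) ((l : ZMod n)) = 0 then 1 else -1
      rw [map_natCast]
      rcases Nat.even_or_odd l with he | ho
      · rw [Even.neg_one_pow he, if_pos]
        rw [ZMod.natCast_eq_zero_iff]
        obtain ⟨c, hc⟩ := he; exact ⟨c, by omega⟩
      · rw [Odd.neg_one_pow ho, if_neg]
        intro hdl
        rw [ZMod.natCast_eq_zero_iff] at hdl
        obtain ⟨c, hc⟩ := hdl; obtain ⟨c2, hc2⟩ := ho; omega
    have hsqalt : ∀ g, altChar F n hdvd g * altChar F n hdvd g = 1 := by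
      rintro (a | a)
      · rw [altChar_r]; split_ifs <;> norm_num
      · rw [altChar_sr]; split_ifs <;> norm_num
    constructor
    · rw [hv, rot_sum w _ hw, expand_plus]
      exact main_case h2 hnF (altChar F n hdvd) w w (fun i => rfl) (fun i => rfl) hsqalt
    · rw [hv, rot_sum w _ hw, expand_minus]
      refine main_case h2 hnF (sgnChar F n * altChar F n hdvd) w (fun i => -1 * w i) ?_ ?_ ?_
      · intro i
        rw [MonoidHom.mul_apply, sgnChar_r, one_mul, altChar_r, hwdef]
      · intro i
        rw [MonoidHom.mul_apply, sgnChar_sr, altChar_sr, hwdef]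
      · intro g
        rw [MonoidHom.mul_apply, mul_mul_mul_comm, hsqalt g]
        rcases g with a | a <;> simp
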